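/- Let P be the uniform distribution on the boundary L of the unit semicircular disc (the union of the segment L_1 from (-1,0) to (1,0) and the upper unit semicircular arc L_2), with density 1/(2+π) with respect to arc length. For integers n_2 ≥ 2, place the points (cos((j-1)π/(n_2-1)), sin((j-1)π/(n_2-1))) for 1 ≤ j ≤ n_2 on L_2. Then the distortion error contributed by L_2, i.e., (1/(2+π)) ∫_0^π min_j |(cos t, sin t) - (cos θ_j, sin θ_j)|^2 dt with θ_j = (j-1)π/(n_2-1), equals (2/(3(2+π))) (3π - 6(n_2-1) sin(π/(2(n_2-1)))). -/

import Mathlib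

open Real

private lemma expand_sq (t a : ℝ) :
    (Real.cos t - Real.cos a)^2 + (Real.sin t - Real.sin a)^2 = 2 - 2 * Real.cos (t - a) := by
  rw [Real.cos_sub]
  linear_combination Real.sin_sq_add_cos_sq t + Real.sin_sq_add_cos_sq a

private lemma nearest_pt {h t : ℝ} (hh : 0 < h) (s j : ℕ) (hts : |t - s * h| ≤ h / 2) :
    |t - s * h| ≤ |t - j * h| := by
  rcases eq_or_ne j s with rfl | hjs
  · exact le_refl _
  · have h0 : (1:ℝ) ≤ |(s:ℝ) - j| := by
      have : ((s:ℤ) - j) ≠ 0 := sub_ne_zero.mpr (by exact_mod_cast hjs.symm)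
      exact_mod_cast Int.one_le_abs this
    have h1 : h ≤ |(s:ℝ) * h - j * h| := by
      have : |(s:ℝ) * h - j * h| = |(s:ℝ) - j| * h := by
        rw [← sub_mul, abs_mul, abs_of_pos hh]
      rw [this]; nlinarith
    have h2 : |(s:ℝ) * h - j * h| - |t - s * h| ≤ |t - j * h| := by
      have := abs_sub_abs_le_abs_sub ((s:ℝ) * h - j * h) (s * h - t)
      have e : (s:ℝ) * h - j * h - (s * h - t) = t - j * h := by ring
      rw [e] at this
      rw [abs_sub_comm ((s:ℝ)*h) t] at this
      linarith
    linarith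

private lemma inf_eq (N : ℕ) (hN : 2 ≤ N) (t : ℝ) (ht0 : 0 ≤ t) (htπ : t ≤ π)
    (s : ℕ) (hs : s + 1 ≤ N) (hts : |t - s * (π / ((N:ℝ)-1))| ≤ (π / ((N:ℝ)-1)) / 2) :
    (⨅ j : Fin N, ((Real.cos t - Real.cos ((j : ℝ) * π / ((N : ℝ) - 1)))^2 +
        (Real.sin t - Real.sin ((j : ℝ) * π / ((N : ℝ) - 1)))^2))
      = 2 - 2 * Real.cos (t - s * (π / ((N:ℝ)-1))) := by
  set c : ℝ := (N:ℝ) - 1 with hc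
  have hc1 : (1:ℝ) ≤ c := by
    have : (2:ℝ) ≤ (N:ℝ) := by exact_mod_cast hN
    simp [hc]; linarith
  set h : ℝ := π / c with hhdef
  have hh : 0 < h := div_pos Real.pi_pos (by linarith)
  have key : ∀ j : Fin N,
      ((Real.cos t - Real.cos ((j : ℝ) * π / c))^2 +
        (Real.sin t - Real.sin ((j : ℝ) * π / c))^2) = 2 - 2 * Real.cos (t - (j:ℝ) * h) := by
    intro j
    rw [expand_sq]
    congr 2
    rw [hhdef]; ring_nf
  have hbdd : BddBelow (Set.range fun j : Fin N =>
      ((Real.cos t - Real.cos ((j : ℝ) * π / c))^2 +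
        (Real.sin t - Real.sin ((j : ℝ) * π / c))^2)) := by
    refine ⟨0, ?_⟩
    rintro x ⟨j, rfl⟩
    positivity
  haveI : Nonempty (Fin N) := ⟨⟨0, by omega⟩⟩
  apply le_antisymm
  · have := ciInf_le hbdd (⟨s, by omega⟩ : Fin N)
    rw [key] at this
    simpa using this
  · apply le_ciInf
    intro j
    rw [key]
    have hjc : (j:ℝ) ≤ c := by
      have : (j:ℕ) + 1 ≤ N := j.isLt
      have : ((j:ℕ):ℝ) + 1 ≤ (N:ℝ) := by exact_mod_cast this
      simp only [hc]; linarith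
    have hjh0 : 0 ≤ (j:ℝ) * h := by positivity
    have hjhπ : (j:ℝ) * h ≤ π := by
      have : (j:ℝ) * h ≤ c * h := by nlinarith
      rw [hhdef] at this
      rwa [mul_div_cancel₀ _ (by linarith : c ≠ 0)] at this
    have habs : |t - (j:ℝ) * h| ≤ π := by
      rw [abs_le]; constructor <;> linarith
    have hmono : Real.cos (t - (j:ℝ) * h) ≤ Real.cos (t - (s:ℝ) * h) := by
      rw [← Real.cos_abs (t - (j:ℝ)*h), ← Real.cos_abs (t - (s:ℝ)*h)]
      exact Real.cos_le_cos_of_nonneg_of_le_pi (abs_nonneg _) habs (nearest_pt hh s j hts)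
    linarith

private lemma integral_piece (a b c : ℝ) :
    ∫ t in a..b, (2 - 2 * Real.cos (t - c)) =
      2 * (b - a) - 2 * (Real.sin (b - c) - Real.sin (a - c)) := by
  have h1 : ∫ t in a..b, (2 - 2 * Real.cos (t - c)) =
      (∫ _t in a..b, (2:ℝ)) - ∫ t in a..b, 2 * Real.cos (t - c) := by
    apply intervalIntegral.integral_sub intervalIntegrable_const
    exact (Continuous.intervalIntegrable (by continuity) a b)
  rw [h1, intervalIntegral.integral_const]
  have h2 : ∫ t in a..b, 2 * Real.cos (t - c) = 2 * ∫ t in a..b, Real.cos (t - c) := by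
    exact intervalIntegral.integral_const_mul 2 _
  rw [h2, intervalIntegral.integral_comp_sub_right (fun x => Real.cos x) c,
    integral_cos]
  simp; ring_nf

theorem stmt4 (n₂ : ℕ) (hn₂ : 2 ≤ n₂) :
    (1 / (2 + π)) * ∫ t in (0:ℝ)..π,
        ⨅ j : Fin n₂,
          ((Real.cos t - Real.cos ((j : ℝ) * π / ((n₂ : ℝ) - 1)))^2 +
           (Real.sin t - Real.sin ((j : ℝ) * π / ((n₂ : ℝ) - 1)))^2)
      = (2 / (3 * (2 + π))) * (3 * π - 6 * ((n₂ : ℝ) - 1) * Real.sin (π / (2 * ((n₂ : ℝ) - 1)))) := by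
  have hπ := Real.pi_pos
  set m : ℕ := n₂ - 1 with hm
  have hm1 : 1 ≤ m := by omega
  have hcast : ((m:ℝ)) = (n₂:ℝ) - 1 := by
    rw [hm]; push_cast [Nat.cast_sub (by omega : 1 ≤ n₂)]; ring
  have hmpos : (0:ℝ) < m := by exact_mod_cast hm1
  set h : ℝ := π / m with hh
  have hhpos : 0 < h := div_pos hπ hmpos
  have hmh : (m:ℝ) * h = π := by rw [hh]; field_simp
  set a : ℕ → ℝ := fun i => i * (h/2) with ha
  set F : ℝ → ℝ := fun t => ⨅ j : Fin n₂,
          ((Real.cos t - Real.cos ((j : ℝ) * π / ((n₂ : ℝ) - 1)))^2 +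
           (Real.sin t - Real.sin ((j : ℝ) * π / ((n₂ : ℝ) - 1)))^2) with hF
  have hpiece : ∀ i, i < 2*m →
      Set.EqOn F (fun t => 2 - 2 * Real.cos (t - (((i+1)/2 : ℕ):ℝ) * h))
        (Set.uIcc (a i) (a (i+1))) := by
    intro i hi t ht
    have hle : a i ≤ a (i+1) := by
      simp only [ha]; push_cast; nlinarith
    rw [Set.uIcc_of_le hle] at ht
    obtain ⟨ht1, ht2⟩ := ht
    set s : ℕ := (i+1)/2 with hs
    have hs2 : i ≤ 2*s ∧ 2*s ≤ i + 1 := by omega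
    have hsm : s + 1 ≤ n₂ := by omega
    have hsl : (i:ℝ) * (h/2) ≤ (s:ℝ) * h := by
      have : (i:ℝ) ≤ 2*s := by exact_mod_cast hs2.1
      nlinarith
    have hsr : (s:ℝ) * h ≤ ((i:ℝ)+1) * (h/2) := by
      have : (2*s:ℝ) ≤ (i:ℝ) + 1 := by exact_mod_cast hs2.2
      nlinarith
    have ht0 : 0 ≤ t := le_trans (by simp only [ha]; positivity) ht1
    have htπ : t ≤ π := by
      have : a (i+1) ≤ π := by
        simp only [ha]
        have : ((i:ℝ)+1) ≤ 2*m := by exact_mod_cast hi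
        rw [← hmh]; push_cast; nlinarith
      linarith
    have hta : |t - (s:ℝ) * h| ≤ h / 2 := by
      simp only [ha] at ht1 ht2
      rw [abs_le]
      push_cast at ht2
      constructor <;> nlinarith
    have := inf_eq n₂ hn₂ t ht0 htπ s hsm (by rw [← hcast, ← hh]; exact hta)
    simp only [hF]
    rw [this, ← hcast, ← hh]
  have hint : ∀ i, i < 2*m → IntervalIntegrable F MeasureTheory.volume (a i) (a (i+1)) := by
    intro i hi
    apply ContinuousOn.intervalIntegrable
    refine ContinuousOn.congr (Continuous.continuousOn ?_) (hpiece i hi)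
    exact continuous_const.sub (continuous_const.mul (Real.continuous_cos.comp (continuous_id.sub continuous_const)))
  have hsum := intervalIntegral.sum_integral_adjacent_intervals hint
  have ha0 : a 0 = 0 := by simp [ha]
  have ha2m : a (2*m) = π := by
    simp only [ha]; push_cast; rw [← hmh]; ring
  rw [ha0, ha2m] at hsum
  have hval : ∀ i ∈ Finset.range (2*m), (∫ t in a i..a (i+1), F t) = h - 2 * Real.sin (h/2) := by
    intro i hi
    rw [Finset.mem_range] at hi
    rw [intervalIntegral.integral_congr (hpiece i hi), integral_piece]
    have e3 : a (i+1) - a i = h/2 := by simp only [ha]; push_cast; ring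
    rcases Nat.even_or_odd i with ⟨k, hk⟩ | ⟨k, hk⟩
    · have hsk : (i+1)/2 = k := by omega
      rw [hsk, hk]
      have e1 : a (k+k+1) - (k:ℝ) * h = h/2 := by simp only [ha]; push_cast; ring
      have e2 : a (k+k) - (k:ℝ) * h = 0 := by simp only [ha]; push_cast; ring
      have e4 : a (k+k+1) - a (k+k) = h/2 := by simp only [ha]; push_cast; ring
      rw [e1, e2, e4, Real.sin_zero]; ring
    · have hsk : (i+1)/2 = k + 1 := by omega
      rw [hsk, hk]
      have e1 : a (2*k+1+1) - ((k:ℝ)+1) * h = 0 := by simp only [ha]; push_cast; ring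
      have e2 : a (2*k+1) - ((k:ℝ)+1) * h = -(h/2) := by simp only [ha]; push_cast; ring
      have e4 : a (2*k+1+1) - a (2*k+1) = h/2 := by simp only [ha]; push_cast; ring
      push_cast
      rw [e1, e2, e4, Real.sin_zero, Real.sin_neg]; ring
  rw [Finset.sum_congr rfl hval, Finset.sum_const, Finset.card_range] at hsum
  rw [← hsum]
  have hrw : π / (2 * ((n₂:ℝ) - 1)) = h / 2 := by rw [← hcast, hh]; ring
  rw [hrw, ← hcast]
  have h2π : (2:ℝ) + π ≠ 0 := by linarith
  rw [hh]
  have hm0 : (m:ℝ) ≠ 0 := ne_of_gt hmpos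
  field_simp
  have e : (m:ℝ) * (m:ℝ)⁻¹ = 1 := mul_inv_cancel₀ hm0
  linear_combination (π * 6 - 12 * (m:ℝ) * Real.sin (π / (2 * (m:ℝ)))) * e
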